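/- For real ν > 0 and 0 < x ≤ 1/4, one has ∫_0^{√x} t^{ν-1}/√(1-4t²) · ((1-√(1-4t²))/(2t²))^ν dt = (1/ν) · x^{ν/2} · ((1-√(1-4x))/(2x))^ν. -/

import Mathlib

open Real MeasureTheory Set

theorem catalan_integral_identity (ν x : ℝ) (hν : 0 < ν) (hx : 0 < x) (hx' : x ≤ 1 / 4) :
    ∫ t in Set.Ioo (0 : ℝ) (Real.sqrt x),
        t ^ (ν - 1) / Real.sqrt (1 - 4 * t ^ 2)
          * ((1 - Real.sqrt (1 - 4 * t ^ 2)) / (2 * t ^ 2)) ^ ν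
      = (1 / ν) * x ^ (ν / 2) * ((1 - Real.sqrt (1 - 4 * x)) / (2 * x)) ^ ν := by
  have hb : 0 < Real.sqrt x := Real.sqrt_pos.mpr hx
  set b := Real.sqrt x with hbdef
  have hbsq : b ^ 2 = x := Real.sq_sqrt hx.le
  have hb2 : b ≤ 1 / 2 := by
    rw [hbdef, show (1:ℝ)/2 = Real.sqrt (1/4) by
      rw [show (1:ℝ)/4 = (1/2)^2 by norm_num, Real.sqrt_sq (by norm_num)]]
    exact Real.sqrt_le_sqrt hx'
  set F : ℝ → ℝ := fun t => (1/ν) * ((1 - Real.sqrt (1 - 4*t^2))/(2*t))^ν with hF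
  set h : ℝ → ℝ := fun t => t ^ (ν - 1) / Real.sqrt (1 - 4 * t ^ 2)
      * ((1 - Real.sqrt (1 - 4 * t ^ 2)) / (2 * t ^ 2)) ^ ν with hh
  -- derivative
  have hderiv : ∀ t ∈ Ioo (0:ℝ) b, HasDerivAt F (h t) t := by
    intro t ht
    obtain ⟨ht0, htb⟩ := ht
    have ht2 : t < 1/2 := lt_of_lt_of_le htb hb2
    have hpos : 0 < 1 - 4*t^2 := by nlinarith
    have hs0 : 0 < Real.sqrt (1 - 4*t^2) := Real.sqrt_pos.mpr hpos
    set s := Real.sqrt (1 - 4*t^2) with hs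
    have hssq : s^2 = 1 - 4*t^2 := Real.sq_sqrt hpos.le
    have hs1 : s < 1 := by nlinarith [hssq, hs0]
    have hu : 0 < 1 - s := by linarith
    have d1 : HasDerivAt (fun t : ℝ => 1 - 4*t^2) (-(8*t)) t := by
      have := ((hasDerivAt_pow 2 t).const_mul (4:ℝ)).const_sub 1
      convert this using 1
      · rfl
      · rfl
      ring
    have d2 : HasDerivAt (fun t : ℝ => Real.sqrt (1 - 4*t^2)) (1/(2*s) * (-(8*t))) t :=
      (Real.hasDerivAt_sqrt hpos.ne').comp t d1
    have d3 : HasDerivAt (fun t : ℝ => 1 - Real.sqrt (1 - 4*t^2))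
        (-(1/(2*s) * (-(8*t)))) t := d2.const_sub 1
    have d4 : HasDerivAt (fun t : ℝ => 2*t) (2:ℝ) t := by
      simpa using (hasDerivAt_id t).const_mul (2:ℝ)
    have hg : 0 < (1 - s)/(2*t) := by positivity
    have d5 : HasDerivAt (fun t : ℝ => (1 - Real.sqrt (1 - 4*t^2))/(2*t))
        ((-(1/(2*s) * (-(8*t))) * (2*t) - (1 - s) * 2)/(2*t)^2) t :=
      d3.div d4 (by positivity)
    have d6 := (d5.rpow_const (p := ν) (Or.inl hg.ne')).const_mul (1/ν)
    convert d6 using 1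
    · rfl
    · rfl
    have hD : (-(1/(2*s) * (-(8*t))) * (2*t) - (1 - s) * 2)/(2*t)^2
        = (1 - s)/(2*t^2*s) := by
      field_simp
      linear_combination 2*hssq
    rw [hD]
    -- rpow algebra
    have e1 : ((1 - s)/(2*t^2))^ν = (1-s)^ν / (2*t^2)^ν :=
      Real.div_rpow hu.le (show (0:ℝ) ≤ 2*t^2 by positivity) ν
    have e2 : ((1 - s)/(2*t))^(ν-1) = (1-s)^(ν-1) / (2*t)^(ν-1) :=
      Real.div_rpow hu.le (show (0:ℝ) ≤ 2*t by positivity) (ν-1)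
    have e3 : ((2:ℝ)*t^2)^ν = 2^ν * (t^ν * t^ν) := by
      rw [Real.mul_rpow (by norm_num) (by positivity),
        show (t^2 : ℝ) = t * t by ring, Real.mul_rpow ht0.le ht0.le]
    have e4 : ((2:ℝ)*t)^(ν-1) = 2^(ν-1) * t^(ν-1) :=
      Real.mul_rpow (by norm_num) ht0.le
    have e5 : (1-s)^(ν-1) = (1-s)^ν / (1-s) := by
      rw [Real.rpow_sub hu, Real.rpow_one]
    have e6 : t^(ν-1) = t^ν / t := by
      rw [Real.rpow_sub ht0, Real.rpow_one]
    have e7 : (2:ℝ)^(ν-1) = 2^ν / 2 := by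
      rw [Real.rpow_sub (by norm_num), Real.rpow_one]
    show t ^ (ν - 1) / s * ((1 - s) / (2 * t ^ 2)) ^ ν
        = 1 / ν * ((1 - s) / (2 * t ^ 2 * s) * ν * ((1 - s) / (2 * t)) ^ (ν - 1))
    rw [e1, e2, e3, e4, e5, e6, e7]
    have n1 : t^ν ≠ 0 := (Real.rpow_pos_of_pos ht0 ν).ne'
    have n2 : (1-s)^ν ≠ 0 := (Real.rpow_pos_of_pos hu ν).ne'
    have n3 : (2:ℝ)^ν ≠ 0 := (Real.rpow_pos_of_pos (by norm_num) ν).ne'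
    field_simp
  -- nonnegativity
  have hnn : ∀ t ∈ Ioo (0:ℝ) b, 0 ≤ h t := by
    intro t ht
    have ht2 : t < 1/2 := lt_of_lt_of_le ht.2 hb2
    have hs1 : Real.sqrt (1 - 4*t^2) ≤ 1 := Real.sqrt_le_one.mpr (by nlinarith)
    apply mul_nonneg (div_nonneg (Real.rpow_nonneg ht.1.le _) (Real.sqrt_nonneg _))
    exact Real.rpow_nonneg (div_nonneg (by linarith) (by positivity)) _
  -- continuity of F on [0, b]
  have hcontF : ContinuousOn F (Icc 0 b) := by
    have hGc : Continuous (fun t : ℝ => (1/ν) * (2*t/(1 + Real.sqrt (1 - 4*t^2)))^ν) := by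
      have hden : ∀ t : ℝ, (1:ℝ) + Real.sqrt (1 - 4*t^2) ≠ 0 := fun t => by positivity
      have hc : Continuous fun t : ℝ => 2*t/(1 + Real.sqrt (1 - 4*t^2)) :=
        (continuous_const.mul continuous_id).div
          (continuous_const.add ((continuous_const.sub
            (continuous_const.mul (continuous_pow 2))).sqrt)) hden
      exact continuous_const.mul (hc.rpow_const fun t => Or.inr hν.le)
    refine hGc.continuousOn.congr ?_
    intro t ht
    rcases eq_or_lt_of_le ht.1 with h0 | ht0
    · rw [hF, ← h0]
      norm_num [Real.zero_rpow hν.ne']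
    · have ht2 : t ≤ 1/2 := le_trans ht.2 hb2
      have hsnn : 0 ≤ 1 - 4*t^2 := by nlinarith
      have hssq : Real.sqrt (1 - 4*t^2) ^ 2 = 1 - 4*t^2 := Real.sq_sqrt hsnn
      have hden : (0:ℝ) < 1 + Real.sqrt (1 - 4*t^2) := by positivity
      have hbe : (1 - Real.sqrt (1 - 4*t^2))/(2*t) = 2*t/(1 + Real.sqrt (1 - 4*t^2)) := by
        field_simp
        nlinarith [hssq]
      show (1/ν) * ((1 - Real.sqrt (1 - 4*t^2))/(2*t))^ν = _
      rw [hbe]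
  -- integrability
  have hint : IntervalIntegrable h volume 0 b :=
    (intervalIntegrable_iff_integrableOn_Ioc_of_le hb.le).mpr
      (intervalIntegral.integrableOn_deriv_of_nonneg hcontF hderiv hnn)
  have key := intervalIntegral.integral_eq_sub_of_hasDerivAt_of_le hb.le hcontF hderiv hint
  have hF0 : F 0 = 0 := by
    rw [hF]
    norm_num [Real.zero_rpow hν.ne']
  have hw1 : Real.sqrt (1 - 4*x) ≤ 1 := Real.sqrt_le_one.mpr (by linarith)
  have hFb : F b = (1 / ν) * x ^ (ν / 2) * ((1 - Real.sqrt (1 - 4 * x)) / (2 * x)) ^ ν := by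
    show (1/ν) * ((1 - Real.sqrt (1 - 4*b^2))/(2*b))^ν = _
    have hbase : (1 - Real.sqrt (1 - 4*b^2))/(2*b)
        = ((1 - Real.sqrt (1 - 4*x))/(2*x)) * b := by
      rw [hbsq, ← hbsq]
      field_simp
    have hsx : b ^ ν = x ^ (ν/2) := by
      rw [hbdef, Real.sqrt_eq_rpow, ← Real.rpow_mul hx.le,
        show (1:ℝ)/2 * ν = ν/2 by ring]
    rw [hbase, Real.mul_rpow (div_nonneg (by linarith) (by positivity)) hb.le, hsx]
    ring
  rw [← MeasureTheory.integral_Ioc_eq_integral_Ioo, ← intervalIntegral.integral_of_le hb.le]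
  rw [show (∫ t in (0:ℝ)..b, t ^ (ν - 1) / Real.sqrt (1 - 4 * t ^ 2)
      * ((1 - Real.sqrt (1 - 4 * t ^ 2)) / (2 * t ^ 2)) ^ ν) = ∫ t in (0:ℝ)..b, h t from rfl,
    key, hF0, hFb, sub_zero]
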